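/- Let X be a centered random vector in ℝⁿ taking values x₁, …, x_m with probabilities p₁, …, p_m > 0, and let Y be another centered random vector in ℝⁿ with finite first moment. Define g(U, V) = Σ_{i=1}^m p_i (U_i + ⟨V_i, x_i⟩) − E[log(Σ_{i=1}^m p_i e^{U_i + ⟨V_i, Y⟩})] on 𝒮 = {(U,V) ∈ ℝ^m × (ℝⁿ)^m : Σ p_i U_i = 0, Σ p_i V_i = 0}. If g(U, V) → −∞ as ‖(U,V)‖ → ∞ with (U,V) ∈ 𝒮, then X ≼_cx Y. -/

import Mathlib

open MeasureTheory Real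
open scoped RealInnerProductSpace ENNReal

/-- Convex order for (finite-first-moment) measures on `ℝⁿ`: for every convex
`f : ℝⁿ → ℝ` whose expectation under `ν` is finite, the expectation under `μ` is finite
and `∫ f dμ ≤ ∫ f dν`. -/
def ConvexOrder {n : ℕ} (μ ν : Measure (EuclideanSpace ℝ (Fin n))) : Prop :=
  ∀ f : EuclideanSpace ℝ (Fin n) → ℝ, ConvexOn ℝ Set.univ f → Integrable f ν →
    Integrable f μ ∧ ∫ x, f x ∂μ ≤ ∫ x, f x ∂ν

/-- The function `g(U, V) = Σᵢ pᵢ (Uᵢ + ⟨Vᵢ, xᵢ⟩) - E[log Σᵢ pᵢ e^{Uᵢ + ⟨Vᵢ, Y⟩}]`. -/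
noncomputable def gfun {n m : ℕ} (p : Fin m → ℝ) (x : Fin m → EuclideanSpace ℝ (Fin n))
    (ν : Measure (EuclideanSpace ℝ (Fin n)))
    (UV : (Fin m → ℝ) × (Fin m → EuclideanSpace ℝ (Fin n))) : ℝ :=
  ∑ i, p i * (UV.1 i + ⟪UV.2 i, x i⟫)
    - ∫ y, Real.log (∑ i, p i * Real.exp (UV.1 i + ⟪UV.2 i, y⟫)) ∂ν

/-- The gauge-fixing subspace `𝒮 = {(U, V) : Σ pᵢ Uᵢ = 0, Σ pᵢ Vᵢ = 0}`. -/
def gaugeSet (n m : ℕ) (p : Fin m → ℝ) :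
    Set ((Fin m → ℝ) × (Fin m → EuclideanSpace ℝ (Fin n))) :=
  {UV | ∑ i, p i * UV.1 i = 0 ∧ ∑ i, p i • UV.2 i = 0}

set_option maxHeartbeats 1000000

lemma exists_subgradient {n : ℕ} (f : EuclideanSpace ℝ (Fin n) → ℝ)
    (hf : ConvexOn ℝ Set.univ f) (x₀ : EuclideanSpace ℝ (Fin n)) :
    ∃ b : EuclideanSpace ℝ (Fin n), ∀ y, f x₀ + ⟪b, y - x₀⟫ ≤ f y := by
  have hfc : Continuous f := hf.locallyLipschitz.continuous
  set S : Set (EuclideanSpace ℝ (Fin n) × ℝ) := {q | q.1 ∈ Set.univ ∧ f q.1 < q.2} with hS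
  have hSo : IsOpen S := by
    have h : S = {q : EuclideanSpace ℝ (Fin n) × ℝ | f q.1 < q.2} := by ext q; simp [hS]
    rw [h]
    exact isOpen_lt (hfc.comp continuous_fst) continuous_snd
  have hSc : Convex ℝ S := hf.convex_strict_epigraph
  have hx₀ : (x₀, f x₀) ∉ S := by simp [hS]
  obtain ⟨ℓ, hℓ⟩ := geometric_hahn_banach_open_point hSc hSo hx₀
  set c : ℝ := ℓ (0, 1) with hcdef
  have hsplit : ∀ (y : EuclideanSpace ℝ (Fin n)) (s : ℝ), ℓ (y, s) = ℓ (y, 0) + s * c := by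
    intro y s
    have h : (y, s) = (y, (0 : ℝ)) + s • ((0 : EuclideanSpace ℝ (Fin n)), (1 : ℝ)) := by
      simp [Prod.ext_iff]
    rw [h, map_add, ℓ.map_smul, smul_eq_mul, hcdef]
  have hc : c < 0 := by
    have h1 := hℓ (x₀, f x₀ + 1) (by simp [hS])
    rw [hsplit x₀ (f x₀ + 1), hsplit x₀ (f x₀)] at h1
    nlinarith
  have key : ∀ y : EuclideanSpace ℝ (Fin n),
      ℓ (y, 0) + c * f y ≤ ℓ (x₀, 0) + c * f x₀ := by
    intro y
    apply le_of_forall_pos_lt_add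
    intro ε hε
    have hd : (0:ℝ) < -c := by linarith
    have hε' : 0 < ε / (-c) := div_pos hε hd
    have h1 := hℓ (y, f y + ε / (-c)) (by simp [hS]; linarith)
    rw [hsplit y _, hsplit x₀ _] at h1
    have h2 : ε / -c * -c = ε := div_mul_cancel₀ ε (ne_of_gt hd)
    nlinarith
  set φ : EuclideanSpace ℝ (Fin n) →L[ℝ] ℝ :=
    ℓ.comp (ContinuousLinearMap.inl ℝ (EuclideanSpace ℝ (Fin n)) ℝ) with hφ
  have hφa : ∀ y : EuclideanSpace ℝ (Fin n), φ y = ℓ (y, 0) := fun y => rfl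
  set b : EuclideanSpace ℝ (Fin n) :=
    (InnerProductSpace.toDual ℝ (EuclideanSpace ℝ (Fin n))).symm ((-c)⁻¹ • φ) with hb
  have hbv : ∀ v : EuclideanSpace ℝ (Fin n), ⟪b, v⟫ = (-c)⁻¹ * φ v := by
    intro v
    rw [hb, InnerProductSpace.toDual_symm_apply]
    simp
  refine ⟨b, fun y => ?_⟩
  have h1 := key y
  rw [hbv]
  have hker : φ (y - x₀) = ℓ (y, 0) - ℓ (x₀, 0) := by
    rw [map_sub, hφa, hφa]
  rw [hker]
  have hcpos : 0 < -c := by linarith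
  have h2 : (-c)⁻¹ * (ℓ (y,0) - ℓ (x₀,0)) ≤ f y - f x₀ := by
    rw [inv_mul_le_iff₀ hcpos]
    nlinarith
  linarith

/-- Let `X` be centered taking values `xᵢ` with probabilities `pᵢ > 0` and let `Y ∼ ν` be
centered with finite first moment.  If `g(U,V) → -∞` as `‖(U,V)‖ → ∞` within `𝒮`, then
`X ≼_cx Y`. -/
theorem statement_14 (n m : ℕ) (hm : 1 ≤ m)
    (p : Fin m → ℝ) (x : Fin m → EuclideanSpace ℝ (Fin n))
    (hp : ∀ i, 0 < p i) (hpsum : ∑ i, p i = 1) (hcent : ∑ i, p i • x i = 0)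
    (ν : Measure (EuclideanSpace ℝ (Fin n))) (hν : IsProbabilityMeasure ν)
    (hmom : Integrable (fun y => y) ν) (hνcent : ∫ y, y ∂ν = 0)
    (hlim : ∀ M : ℝ, ∃ R : ℝ, ∀ UV ∈ gaugeSet n m p, R ≤ ‖UV‖ → gfun p x ν UV ≤ M) :
    ConvexOrder (∑ i, ENNReal.ofReal (p i) • Measure.dirac (x i)) ν := by
  intro f hf hfint
  have i0 : Fin m := ⟨0, hm⟩
  have hfc : Continuous f := hf.locallyLipschitz.continuous
  -- integrability w.r.t. the discrete measure
  have hdint : ∀ i : Fin m, Integrable f (ENNReal.ofReal (p i) • Measure.dirac (x i)) := by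
    intro i
    refine Integrable.smul_measure ⟨hfc.aestronglyMeasurable, ?_⟩ ENNReal.ofReal_ne_top
    simp [HasFiniteIntegral, lintegral_dirac]
  have hμint : Integrable f (∑ i, ENNReal.ofReal (p i) • Measure.dirac (x i)) :=
    integrable_finset_sum_measure.2 fun i _ => hdint i
  refine ⟨hμint, ?_⟩
  have hμeq : ∫ z, f z ∂(∑ i, ENNReal.ofReal (p i) • Measure.dirac (x i))
      = ∑ i, p i * f (x i) := by
    rw [integral_finset_sum_measure fun i _ => hdint i]
    refine Finset.sum_congr rfl fun i _ => ?_
    rw [integral_smul_measure, integral_dirac, ENNReal.toReal_ofReal (hp i).le, smul_eq_mul]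
  rw [hμeq]
  -- subgradients
  choose b hbsub using fun i => exists_subgradient f hf (x i)
  set a : Fin m → ℝ := fun i => f (x i) - ⟪b i, x i⟫ with ha
  have hmin : ∀ i y, a i + ⟪b i, y⟫ ≤ f y := by
    intro i y
    have h := hbsub i y
    rw [inner_sub_right] at h
    simp only [ha]
    linarith
  have hfx : ∀ i, f (x i) = a i + ⟪b i, x i⟫ := by
    intro i; simp [ha]
  set abar : ℝ := ∑ i, p i * a i with habar
  set bbar : EuclideanSpace ℝ (Fin n) := ∑ i, p i • b i with hbbar
  set S : ℝ := ∑ i, p i * f (x i) with hSdef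
  -- integrability of inner products
  have hinner_int : ∀ v : EuclideanSpace ℝ (Fin n),
      Integrable (fun y => ⟪v, y⟫) ν := by
    intro v
    have := (innerSL ℝ v).integrable_comp hmom
    simpa using this
  have hinner_zero : ∀ v : EuclideanSpace ℝ (Fin n), ∫ y, ⟪v, y⟫ ∂ν = 0 := by
    intro v
    have h := (innerSL ℝ v).integral_comp_comm hmom
    simpa [hνcent] using h
  have hbbar_zero : ∑ i, p i * ⟪bbar, x i⟫ = 0 := by
    have h : ∑ i, p i * ⟪bbar, x i⟫ = ⟪bbar, ∑ i, p i • x i⟫ := by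
      rw [inner_sum]
      exact Finset.sum_congr rfl fun i _ => (real_inner_smul_right _ _ _).symm
    rw [h, hcent, inner_zero_right]
  by_cases hA : ∀ i, a i = abar ∧ b i = bbar
  · -- degenerate case: f agrees with an affine function at the x i
    have hSa : S = abar := by
      have h1 : S = ∑ i, p i * (abar + ⟪bbar, x i⟫) := by
        refine Finset.sum_congr rfl fun i _ => ?_
        rw [hfx i, (hA i).1, (hA i).2]
      rw [h1]
      simp only [mul_add]
      rw [Finset.sum_add_distrib, ← Finset.sum_mul, hpsum, one_mul, hbbar_zero, add_zero]
    have hle : ∀ y, abar + ⟪bbar, y⟫ ≤ f y := by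
      intro y
      have h := hmin i0 y
      rw [(hA i0).1, (hA i0).2] at h
      exact h
    have haff_int : Integrable (fun y => abar + ⟪bbar, y⟫) ν :=
      (integrable_const abar).add (hinner_int bbar)
    have h2 : ∫ y, (abar + ⟪bbar, y⟫) ∂ν ≤ ∫ y, f y ∂ν :=
      integral_mono haff_int hfint hle
    have h3 : ∫ y, (abar + ⟪bbar, y⟫) ∂ν = abar := by
      rw [integral_add (integrable_const abar) (hinner_int bbar), integral_const,
        hinner_zero, probReal_univ, one_smul, add_zero]
    rw [hSa]
    linarith
  · -- main case
    set U : Fin m → ℝ := fun i => a i - abar with hUdef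
    set V : Fin m → EuclideanSpace ℝ (Fin n) := fun i => b i - bbar with hVdef
    have hUV0 : ((U, V) : (Fin m → ℝ) × (Fin m → EuclideanSpace ℝ (Fin n))) ≠ 0 := by
      intro h
      apply hA
      intro i
      have hU : U = 0 := by have := congrArg Prod.fst h; simpa using this
      have hV : V = 0 := by have := congrArg Prod.snd h; simpa using this
      have h1 : U i = 0 := by rw [hU]; rfl
      have h2 : V i = 0 := by rw [hV]; rfl
      constructor
      · have := h1; rw [hUdef] at this; simpa [sub_eq_zero] using this
      · have := h2; rw [hVdef] at this; simpa [sub_eq_zero] using this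
    by_contra hlt
    push_neg at hlt
    set δ : ℝ := S - ∫ y, f y ∂ν with hδdef
    have hδ : 0 < δ := by rw [hδdef]; linarith
    have hU0 : ∑ i, p i * U i = 0 := by
      simp only [hUdef, mul_sub]
      rw [Finset.sum_sub_distrib, ← Finset.sum_mul, hpsum, one_mul, ← habar, sub_self]
    have hV0 : ∑ i, p i • V i = 0 := by
      simp only [hVdef, smul_sub]
      rw [Finset.sum_sub_distrib, ← Finset.sum_smul, hpsum, one_smul, ← hbbar, sub_self]
    have hS1 : ∑ i, p i * (U i + ⟪V i, x i⟫) = S - abar := by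
      simp only [mul_add]
      rw [Finset.sum_add_distrib, hU0, zero_add]
      have h1 : ∀ i, p i * ⟪V i, x i⟫ = p i * ⟪b i, x i⟫ - p i * ⟪bbar, x i⟫ := by
        intro i
        rw [hVdef]
        simp only [inner_sub_left]
        ring
      rw [Finset.sum_congr rfl fun i _ => h1 i, Finset.sum_sub_distrib, hbbar_zero, sub_zero]
      have h2 : ∀ i, p i * ⟪b i, x i⟫ = p i * f (x i) - p i * a i := by
        intro i
        rw [hfx i]; ring
      rw [Finset.sum_congr rfl fun i _ => h2 i, Finset.sum_sub_distrib, ← hSdef, ← habar]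
    -- the key lower bound along the ray
    have hkey : ∀ t : ℝ, 0 ≤ t → t * δ ≤ gfun p x ν (t • (U, V)) := by
      intro t ht
      set Z : EuclideanSpace ℝ (Fin n) → ℝ :=
        fun y => ∑ i, p i * Real.exp (t * U i + t * ⟪V i, y⟫) with hZ
      have hZpos : ∀ y, 0 < Z y := by
        intro y
        rw [hZ]
        refine Finset.sum_pos (fun i _ => mul_pos (hp i) (Real.exp_pos _)) ⟨i0, Finset.mem_univ i0⟩
      have hWle : ∀ i y, U i + ⟪V i, y⟫ ≤ f y - abar - ⟪bbar, y⟫ := by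
        intro i y
        have h := hmin i y
        rw [hUdef, hVdef]
        simp only [inner_sub_left]
        linarith
      have hZle : ∀ y, Real.log (Z y) ≤ t * (f y - abar - ⟪bbar, y⟫) := by
        intro y
        rw [Real.log_le_iff_le_exp (hZpos y)]
        calc Z y ≤ ∑ i, p i * Real.exp (t * (f y - abar - ⟪bbar, y⟫)) := by
              refine Finset.sum_le_sum fun i _ => ?_
              refine mul_le_mul_of_nonneg_left ?_ (hp i).le
              refine Real.exp_le_exp.2 ?_
              have heq : t * U i + t * ⟪V i, y⟫ = t * (U i + ⟪V i, y⟫) := by ring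
              rw [heq]
              exact mul_le_mul_of_nonneg_left (hWle i y) ht
          _ = Real.exp (t * (f y - abar - ⟪bbar, y⟫)) := by
              rw [← Finset.sum_mul, hpsum, one_mul]
      have hZge : ∀ y, Real.log (p i0) + (t * U i0 + t * ⟪V i0, y⟫) ≤ Real.log (Z y) := by
        intro y
        have h1 : p i0 * Real.exp (t * U i0 + t * ⟪V i0, y⟫) ≤ Z y := by
          rw [hZ]
          show p i0 * Real.exp (t * U i0 + t * ⟪V i0, y⟫)
            ≤ ∑ i, p i * Real.exp (t * U i + t * ⟪V i, y⟫)
          exact Finset.single_le_sum (f := fun i => p i * Real.exp (t * U i + t * ⟪V i, y⟫))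
            (fun i _ => (mul_pos (hp i) (Real.exp_pos _)).le) (Finset.mem_univ i0)
        have h2 := Real.log_le_log (mul_pos (hp i0) (Real.exp_pos _)) h1
        rwa [Real.log_mul (hp i0).ne' (Real.exp_ne_zero _), Real.log_exp] at h2
      have hZcont : Continuous fun y => Real.log (Z y) := by
        refine Continuous.log ?_ fun y => (hZpos y).ne'
        refine continuous_finset_sum _ fun i _ => ?_
        exact continuous_const.mul (Real.continuous_exp.comp
          (continuous_const.add (continuous_const.mul (innerSL ℝ (V i)).continuous)))
      set lo : EuclideanSpace ℝ (Fin n) → ℝ :=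
        fun y => (Real.log (p i0) + t * U i0) + t * ⟪V i0, y⟫ with hlo
      set hi : EuclideanSpace ℝ (Fin n) → ℝ :=
        fun y => t * (f y - (abar + ⟪bbar, y⟫)) with hhi
      have hlo_int : Integrable lo ν :=
        (integrable_const _).add ((hinner_int (V i0)).const_mul t)
      have hhi_int : Integrable hi ν :=
        ((hfint.sub ((integrable_const abar).add (hinner_int bbar))).const_mul t)
      have hZle' : ∀ y, Real.log (Z y) ≤ hi y := by
        intro y
        have := hZle y
        rw [hhi]
        simp only
        have : f y - abar - ⟪bbar, y⟫ = f y - (abar + ⟪bbar, y⟫) := by ring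
        rw [← this]
        exact hZle y
      have hZge' : ∀ y, lo y ≤ Real.log (Z y) := by
        intro y
        have := hZge y
        rw [hlo]
        simp only
        linarith
      have hint : Integrable (fun y => Real.log (Z y)) ν := by
        refine Integrable.mono' (hlo_int.abs.add hhi_int.abs) hZcont.aestronglyMeasurable
          (Filter.Eventually.of_forall fun y => ?_)
        rw [Pi.add_apply, Real.norm_eq_abs, abs_le]
        constructor
        · have := hZge' y
          have h1 := neg_abs_le (lo y)
          have h2 := abs_nonneg (hi y)
          linarith
        · have := hZle' y
          have h1 := le_abs_self (hi y)
          have h2 := abs_nonneg (lo y)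
          linarith
      have haff_int2 : Integrable (fun y => abar + ⟪bbar, y⟫) ν :=
        (integrable_const abar).add (hinner_int bbar)
      have haff_eq : ∫ y, (abar + ⟪bbar, y⟫) ∂ν = abar := by
        rw [integral_add (integrable_const abar) (hinner_int bbar), integral_const,
          hinner_zero, probReal_univ, one_smul, add_zero]
      have hIle : ∫ y, Real.log (Z y) ∂ν ≤ t * ((∫ y, f y ∂ν) - abar) := by
        have h1 := integral_mono hint hhi_int hZle'
        have h2 : ∫ y, hi y ∂ν = t * ((∫ y, f y ∂ν) - abar) := by
          rw [hhi]
          simp only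
          rw [integral_const_mul, integral_sub hfint haff_int2, haff_eq]
        rw [← h2]
        exact h1
      have hgeq : gfun p x ν (t • (U, V))
          = ∑ i, p i * (t * U i + t * ⟪V i, x i⟫) - ∫ y, Real.log (Z y) ∂ν := by
        simp only [gfun, Prod.smul_fst, Prod.smul_snd, Pi.smul_apply, smul_eq_mul,
          real_inner_smul_left, hZ]
      have hsum : ∑ i, p i * (t * U i + t * ⟪V i, x i⟫) = t * (S - abar) := by
        have h1 : ∀ i, p i * (t * U i + t * ⟪V i, x i⟫) = t * (p i * (U i + ⟪V i, x i⟫)) := by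
          intro i; ring
        rw [Finset.sum_congr rfl fun i _ => h1 i, ← Finset.mul_sum, hS1]
      rw [hgeq, hsum]
      have : t * (S - abar) - t * ((∫ y, f y ∂ν) - abar) = t * δ := by
        rw [hδdef]; ring
      linarith
    -- conclude using the coercivity hypothesis
    obtain ⟨R, hR⟩ := hlim 0
    have hnorm : 0 < ‖((U, V) : (Fin m → ℝ) × (Fin m → EuclideanSpace ℝ (Fin n)))‖ :=
      norm_pos_iff.2 hUV0
    set t : ℝ := max (R / ‖((U, V) : (Fin m → ℝ) × (Fin m → EuclideanSpace ℝ (Fin n)))‖) (1 / δ)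
      with htdef
    have ht1 : 1 / δ ≤ t := le_max_right _ _
    have htpos : 0 < t := lt_of_lt_of_le (by positivity) ht1
    have hgauge : t • ((U, V) : (Fin m → ℝ) × (Fin m → EuclideanSpace ℝ (Fin n)))
        ∈ gaugeSet n m p := by
      constructor
      · simp only [Prod.smul_fst, Pi.smul_apply, smul_eq_mul]
        have h1 : ∀ i, p i * (t * U i) = t * (p i * U i) := fun i => by ring
        rw [Finset.sum_congr rfl fun i _ => h1 i, ← Finset.mul_sum, hU0, mul_zero]
      · simp only [Prod.smul_snd, Pi.smul_apply]
        have h1 : ∀ i, p i • (t • V i) = t • (p i • V i) := fun i => smul_comm _ _ _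
        rw [Finset.sum_congr rfl fun i _ => h1 i, ← Finset.smul_sum, hV0, smul_zero]
    have htR : R ≤ ‖t • ((U, V) : (Fin m → ℝ) × (Fin m → EuclideanSpace ℝ (Fin n)))‖ := by
      rw [norm_smul, Real.norm_eq_abs, abs_of_pos htpos]
      have h1 : R / ‖((U, V) : (Fin m → ℝ) × (Fin m → EuclideanSpace ℝ (Fin n)))‖ ≤ t :=
        le_max_left _ _
      exact (div_le_iff₀ hnorm).1 h1
    have h1 := hR _ hgauge htR
    have h2 := hkey t htpos.le
    have h3 : 1 ≤ t * δ := by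
      have := (div_le_iff₀ hδ).1 ht1
      linarith
    linarith
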